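/- Let A₁, A₂, Ã₁, Ã₂ ∈ ℝ^{m×n} be entrywise nonnegative with Ã₁ ⊵_ε A₁ and Ã₂ ⊵_ε A₂. Then the horizontal concatenation [Ã₁ Ã₂] ∈ ℝ^{m×(n+n)} satisfies [Ã₁ Ã₂] ⊵_ε [A₁ A₂]. -/

import Mathlib

open Matrix ComplexOrder

/-- Row-sum degree matrix of `A`. -/
def rowDeg {α β : Type*} [Fintype α] [Fintype β] [DecidableEq α]
    (A : Matrix α β ℝ) : Matrix α α ℝ :=
  Matrix.diagonal fun i => ∑ j, A i j

/-- Column-sum degree matrix of `A`. -/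
def colDeg {α β : Type*} [Fintype α] [Fintype β] [DecidableEq β]
    (A : Matrix α β ℝ) : Matrix β β ℝ :=
  Matrix.diagonal fun j => ∑ i, A i j

/-- The error matrix `E := D_row − A · D_col⁻ · Aᵀ` (with `0⁻¹ = 0`). -/
noncomputable def errE {α β : Type*} [Fintype α] [Fintype β] [DecidableEq α] [DecidableEq β]
    (A : Matrix α β ℝ) : Matrix α α ℝ :=
  rowDeg A - A * Matrix.diagonal (fun j => (∑ i, A i j)⁻¹) * Aᵀ

/-- The error matrix `F := D_col − Aᵀ · D_row⁻ · A` (with `0⁻¹ = 0`). -/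
noncomputable def errF {α β : Type*} [Fintype α] [Fintype β] [DecidableEq α] [DecidableEq β]
    (A : Matrix α β ℝ) : Matrix β β ℝ :=
  colDeg A - Aᵀ * Matrix.diagonal (fun i => (∑ j, A i j)⁻¹) * A

/-- `Ã ⊵_ε A`: `Ã` is an `ε`-SV approximation of the entrywise-nonnegative matrix `A`,
with degree matrices given by the row and column sums of `A` (real matrices viewed as
complex for the bilinear-form inequality). -/
noncomputable def IsSVgApprox {α β : Type*} [Fintype α] [Fintype β] [DecidableEq α]
    [DecidableEq β] (ε : ℝ) (A Atil : Matrix α β ℝ) : Prop :=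
  (errE A).PosSemidef ∧ (errF A).PosSemidef ∧
  ∀ (x : α → ℂ) (y : β → ℂ),
    ‖star x ⬝ᵥ ((Atil - A).map fun a => (a : ℂ)).mulVec y‖ ≤
      ε / 4 * ((star x ⬝ᵥ ((errE A).map fun a => (a : ℂ)).mulVec x).re +
        (star y ⬝ᵥ ((errF A).map fun a => (a : ℂ)).mulVec y).re)


set_option linter.unusedSectionVars false
set_option linter.unusedVariables false

section SVaux

lemma sc_key (d₁ d₂ a b : ℝ) (hd₁ : 0 ≤ d₁) (hd₂ : 0 ≤ d₂) (ha : 0 ≤ a) (hb : 0 ≤ b)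
    (h₁ : d₁ = 0 → a = 0) (h₂ : d₂ = 0 → b = 0) :
    (d₁ + d₂)⁻¹ * (a + b) ^ 2 ≤ d₁⁻¹ * a ^ 2 + d₂⁻¹ * b ^ 2 := by
  rcases eq_or_lt_of_le hd₁ with h | h
  · rw [← h, h₁ h.symm]; simp
  rcases eq_or_lt_of_le hd₂ with h' | h'
  · rw [← h', h₂ h'.symm]; simp
  have hsum : 0 < d₁ + d₂ := by linarith
  rw [inv_mul_eq_div, inv_mul_eq_div, inv_mul_eq_div,
    div_add_div _ _ h.ne' h'.ne', div_le_div_iff₀ hsum (mul_pos h h')]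
  nlinarith [sq_nonneg (d₂ * a - d₁ * b)]

lemma sc_keyC (d₁ d₂ : ℝ) (u v : ℂ) (hd₁ : 0 ≤ d₁) (hd₂ : 0 ≤ d₂)
    (h₁ : d₁ = 0 → u = 0) (h₂ : d₂ = 0 → v = 0) :
    (d₁ + d₂)⁻¹ * Complex.normSq (u + v) ≤
      d₁⁻¹ * Complex.normSq u + d₂⁻¹ * Complex.normSq v := by
  have hn : ∀ z : ℂ, Complex.normSq z = ‖z‖ ^ 2 := fun z => by
    rw [Complex.normSq_eq_norm_sq]
  rw [hn, hn, hn]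
  calc (d₁ + d₂)⁻¹ * ‖u + v‖ ^ 2 ≤ (d₁ + d₂)⁻¹ * (‖u‖ + ‖v‖) ^ 2 := by
        apply mul_le_mul_of_nonneg_left _ (by positivity)
        apply pow_le_pow_left₀ (norm_nonneg _) (norm_add_le u v)
    _ ≤ d₁⁻¹ * ‖u‖ ^ 2 + d₂⁻¹ * ‖v‖ ^ 2 :=
        sc_key d₁ d₂ _ _ hd₁ hd₂ (norm_nonneg _) (norm_nonneg _)
          (fun h => by simp [h₁ h]) (fun h => by simp [h₂ h])

variable {α β : Type*} [Fintype α] [Fintype β] [DecidableEq α] [DecidableEq β]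

-- complex quadratic form of Aᵀ D A
lemma formC_tDA (A : Matrix α β ℝ) (d : α → ℝ) (y : β → ℂ) :
    star y ⬝ᵥ ((Aᵀ * Matrix.diagonal d * A).map fun a => (a : ℂ)) *ᵥ y =
      ((∑ i, d i * Complex.normSq ((((A.map fun a => (a : ℂ))) *ᵥ y) i) : ℝ) : ℂ) := by
  have hmap : ((Aᵀ * Matrix.diagonal d * A).map fun a => (a : ℂ)) =
      (A.map fun a => (a : ℂ))ᵀ * Matrix.diagonal (fun i => (d i : ℂ)) *
        (A.map fun a => (a : ℂ)) := by
    have : (fun a : ℝ => (a : ℂ)) = ⇑Complex.ofRealHom := rfl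
    rw [this, Matrix.map_mul, Matrix.map_mul, Matrix.transpose_map]
    congr 1
    · congr 1
      rw [Matrix.diagonal_map (by simp)]; rfl
  set B := (A.map fun a => (a : ℂ))
  have hB : Bᴴ = Bᵀ := by
    ext i j; simp [Matrix.conjTranspose_apply, B, Matrix.map_apply]
  rw [hmap, ← Matrix.mulVec_mulVec, ← Matrix.mulVec_mulVec,
    Matrix.dotProduct_mulVec, Matrix.vecMul_transpose]
  have hstar : B *ᵥ star y = star (B *ᵥ y) := by
    rw [Matrix.star_mulVec, hB, Matrix.vecMul_transpose]
  rw [hstar]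
  simp only [dotProduct, Matrix.mulVec_diagonal, Pi.star_apply, Complex.star_def]
  push_cast
  congr 1; ext i
  rw [show (starRingEnd ℂ) ((B *ᵥ y) i) * ((d i : ℂ) * ((B *ᵥ y) i)) =
    (d i : ℂ) * (((B *ᵥ y) i) * (starRingEnd ℂ) ((B *ᵥ y) i)) by ring, Complex.mul_conj]

lemma formC_diag (c : β → ℝ) (y : β → ℂ) :
    star y ⬝ᵥ ((Matrix.diagonal c).map fun a => (a : ℂ)) *ᵥ y =
      ((∑ j, c j * Complex.normSq (y j) : ℝ) : ℂ) := by
  rw [Matrix.diagonal_map (by simp)]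
  simp only [dotProduct, Matrix.mulVec_diagonal, Pi.star_apply, Complex.star_def]
  push_cast
  congr 1; ext j
  rw [show (starRingEnd ℂ) (y j) * ((c j : ℂ) * y j) =
    (c j : ℂ) * (y j * (starRingEnd ℂ) (y j)) by ring, Complex.mul_conj]

lemma formC_errF (A : Matrix α β ℝ) (y : β → ℂ) :
    (star y ⬝ᵥ ((errF A).map fun a => (a : ℂ)) *ᵥ y).re =
      ∑ j, (∑ i, A i j) * Complex.normSq (y j) -
        ∑ i, (∑ j, A i j)⁻¹ * Complex.normSq ((((A.map fun a => (a : ℂ))) *ᵥ y) i) := by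
  have : ((errF A).map fun a => (a : ℂ)) = ((colDeg A).map fun a => (a : ℂ)) -
      ((Aᵀ * Matrix.diagonal (fun i => (∑ j, A i j)⁻¹) * A).map fun a => (a : ℂ)) := by
    rw [errF, Matrix.map_sub _ (by push_cast; simp)]
  rw [this, Matrix.sub_mulVec, dotProduct_sub, colDeg, formC_diag, formC_tDA]
  rw [← Complex.ofReal_sub, Complex.ofReal_re]

lemma formR_errF (A : Matrix α β ℝ) (x : β → ℝ) :
    x ⬝ᵥ errF A *ᵥ x =
      ∑ j, (∑ i, A i j) * x j ^ 2 - ∑ i, (∑ j, A i j)⁻¹ * ((A *ᵥ x) i) ^ 2 := by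
  rw [errF, Matrix.sub_mulVec, dotProduct_sub]
  congr 1
  · simp only [colDeg, dotProduct, Matrix.mulVec_diagonal]; congr 1; ext j; ring
  · rw [← Matrix.mulVec_mulVec, ← Matrix.mulVec_mulVec, Matrix.dotProduct_mulVec,
      Matrix.vecMul_transpose]
    simp only [dotProduct, Matrix.mulVec_diagonal]
    congr 1; ext i; ring

lemma errF_isHermitian (A : Matrix α β ℝ) : (errF A).IsHermitian := by
  have h1 : (Aᵀ)ᴴ = A := by ext i j; simp [Matrix.conjTranspose_apply]
  have h2 : (Aᵀ * Matrix.diagonal (fun i => (∑ j, A i j)⁻¹) * A).IsHermitian := by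
    have := Matrix.isHermitian_mul_mul_conjTranspose Aᵀ
      (Matrix.isHermitian_diagonal fun i => (∑ j, A i j)⁻¹)
    rwa [h1] at this
  exact ((Matrix.isHermitian_diagonal _).sub h2)

-- row sums / col sums / mulVec of fromColumns
lemma rowsum_fc (A₁ A₂ : Matrix α β ℝ) (i : α) :
    ∑ j, Matrix.fromCols A₁ A₂ i j = (∑ j, A₁ i j) + ∑ j, A₂ i j := by
  rw [Fintype.sum_sum_type]; simp

lemma mulVec_fcR (A₁ A₂ : Matrix α β ℝ) (x : β ⊕ β → ℝ) (i : α) :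
    (Matrix.fromCols A₁ A₂ *ᵥ x) i = (A₁ *ᵥ (x ∘ Sum.inl)) i + (A₂ *ᵥ (x ∘ Sum.inr)) i := by
  simp only [Matrix.mulVec, dotProduct, Fintype.sum_sum_type,
    Matrix.fromCols_apply_inl, Matrix.fromCols_apply_inr, Function.comp]

lemma map_fc (A₁ A₂ : Matrix α β ℝ) :
    ((Matrix.fromCols A₁ A₂).map fun a => (a : ℂ)) =
      Matrix.fromCols (A₁.map fun a => (a : ℂ)) (A₂.map fun a => (a : ℂ)) := by
  ext i j; cases j <;> simp [Matrix.map_apply]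

lemma mulVec_fcC (A₁ A₂ : Matrix α β ℝ) (y : β ⊕ β → ℂ) (i : α) :
    (((Matrix.fromCols A₁ A₂).map fun a => (a : ℂ)) *ᵥ y) i =
      ((A₁.map fun a => (a : ℂ)) *ᵥ (y ∘ Sum.inl)) i +
        ((A₂.map fun a => (a : ℂ)) *ᵥ (y ∘ Sum.inr)) i := by
  rw [map_fc]
  simp only [Matrix.mulVec, dotProduct, Fintype.sum_sum_type,
    Matrix.fromCols_apply_inl, Matrix.fromCols_apply_inr, Function.comp]

-- zero row sum forces zero mulVec entry
lemma rowzeroR (A : Matrix α β ℝ) (hA : ∀ i j, 0 ≤ A i j) (x : β → ℝ) (i : α)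
    (h : (∑ j, A i j) = 0) : (A *ᵥ x) i = 0 := by
  have : ∀ j ∈ Finset.univ, A i j = 0 :=
    (Finset.sum_eq_zero_iff_of_nonneg (fun j _ => hA i j)).mp h
  simp only [Matrix.mulVec, dotProduct]
  exact Finset.sum_eq_zero fun j _ => by rw [this j (Finset.mem_univ j), zero_mul]

lemma rowzeroC (A : Matrix α β ℝ) (hA : ∀ i j, 0 ≤ A i j) (y : β → ℂ) (i : α)
    (h : (∑ j, A i j) = 0) : ((A.map fun a => (a : ℂ)) *ᵥ y) i = 0 := by
  have : ∀ j ∈ Finset.univ, A i j = 0 :=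
    (Finset.sum_eq_zero_iff_of_nonneg (fun j _ => hA i j)).mp h
  simp only [Matrix.mulVec, dotProduct, Matrix.map_apply]
  exact Finset.sum_eq_zero fun j _ => by rw [this j (Finset.mem_univ j)]; simp

lemma midE {α γ : Type*} [Fintype α] [Fintype γ] [DecidableEq γ]
    (A : Matrix α γ ℝ) (i k : α) :
    (A * Matrix.diagonal (fun j => (∑ i, A i j)⁻¹) * Aᵀ) i k =
      ∑ j, A i j * (∑ i', A i' j)⁻¹ * A k j := by
  rw [Matrix.mul_apply]
  refine Finset.sum_congr rfl fun j _ => ?_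
  rw [Matrix.mul_diagonal, Matrix.transpose_apply]

-- errE of fromColumns
lemma errE_fc (A₁ A₂ : Matrix α β ℝ) :
    errE (Matrix.fromCols A₁ A₂) = errE A₁ + errE A₂ := by
  ext i k
  simp only [errE, rowDeg, Matrix.sub_apply, Matrix.add_apply, midE]
  have hcol : ∀ j, (∑ i', Matrix.fromCols A₁ A₂ i' (Sum.inl j)) = ∑ i', A₁ i' j := by
    intro j; simp
  have hcol' : ∀ j, (∑ i', Matrix.fromCols A₁ A₂ i' (Sum.inr j)) = ∑ i', A₂ i' j := by
    intro j; simp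
  rw [Fintype.sum_sum_type]
  simp only [Matrix.fromCols_apply_inl, Matrix.fromCols_apply_inr, hcol, hcol']
  rw [show (Matrix.diagonal fun i => ∑ j, Matrix.fromCols A₁ A₂ i j) i k
      = (Matrix.diagonal fun i => ∑ j, A₁ i j) i k + (Matrix.diagonal fun i => ∑ j, A₂ i j) i k by
    by_cases h : i = k
    · subst h; simp [Matrix.diagonal_apply_eq, rowsum_fc]
    · simp [Matrix.diagonal_apply_ne _ h]]
  ring


lemma keyR (A₁ A₂ : Matrix α β ℝ) (hA₁ : ∀ i j, 0 ≤ A₁ i j) (hA₂ : ∀ i j, 0 ≤ A₂ i j)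
    (x : β ⊕ β → ℝ) :
    (x ∘ Sum.inl) ⬝ᵥ errF A₁ *ᵥ (x ∘ Sum.inl) + (x ∘ Sum.inr) ⬝ᵥ errF A₂ *ᵥ (x ∘ Sum.inr) ≤
      x ⬝ᵥ errF (Matrix.fromCols A₁ A₂) *ᵥ x := by
  rw [formR_errF, formR_errF, formR_errF]
  have hcol : ∑ j : β ⊕ β, (∑ i, Matrix.fromCols A₁ A₂ i j) * x j ^ 2 =
      (∑ j, (∑ i, A₁ i j) * (x ∘ Sum.inl) j ^ 2) +
        ∑ j, (∑ i, A₂ i j) * (x ∘ Sum.inr) j ^ 2 := by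
    rw [Fintype.sum_sum_type]; simp [Function.comp]
  rw [hcol]
  have hmain : ∑ i, (∑ j : β ⊕ β, Matrix.fromCols A₁ A₂ i j)⁻¹ *
        ((Matrix.fromCols A₁ A₂ *ᵥ x) i) ^ 2 ≤
      (∑ i, (∑ j, A₁ i j)⁻¹ * ((A₁ *ᵥ (x ∘ Sum.inl)) i) ^ 2) +
        ∑ i, (∑ j, A₂ i j)⁻¹ * ((A₂ *ᵥ (x ∘ Sum.inr)) i) ^ 2 := by
    rw [← Finset.sum_add_distrib]
    refine Finset.sum_le_sum fun i _ => ?_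
    rw [rowsum_fc, mulVec_fcR]
    have h1 : (0:ℝ) ≤ ∑ j, A₁ i j := Finset.sum_nonneg fun j _ => hA₁ i j
    have h2 : (0:ℝ) ≤ ∑ j, A₂ i j := Finset.sum_nonneg fun j _ => hA₂ i j
    have := sc_keyC (∑ j, A₁ i j) (∑ j, A₂ i j)
      (((A₁ *ᵥ (x ∘ Sum.inl)) i : ℝ) : ℂ) (((A₂ *ᵥ (x ∘ Sum.inr)) i : ℝ) : ℂ) h1 h2
      (fun h => by exact_mod_cast congrArg (fun r : ℝ => (r : ℂ)) (rowzeroR A₁ hA₁ _ i h))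
      (fun h => by exact_mod_cast congrArg (fun r : ℝ => (r : ℂ)) (rowzeroR A₂ hA₂ _ i h))
    simp only [← Complex.ofReal_add, Complex.normSq_ofReal] at this
    simpa [sq] using this
  linarith

lemma keyC (A₁ A₂ : Matrix α β ℝ) (hA₁ : ∀ i j, 0 ≤ A₁ i j) (hA₂ : ∀ i j, 0 ≤ A₂ i j)
    (y : β ⊕ β → ℂ) :
    (star (y ∘ Sum.inl) ⬝ᵥ ((errF A₁).map fun a => (a : ℂ)) *ᵥ (y ∘ Sum.inl)).re +
      (star (y ∘ Sum.inr) ⬝ᵥ ((errF A₂).map fun a => (a : ℂ)) *ᵥ (y ∘ Sum.inr)).re ≤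
      (star y ⬝ᵥ ((errF (Matrix.fromCols A₁ A₂)).map fun a => (a : ℂ)) *ᵥ y).re := by
  rw [formC_errF, formC_errF, formC_errF]
  have hcol : ∑ j : β ⊕ β, (∑ i, Matrix.fromCols A₁ A₂ i j) * Complex.normSq (y j) =
      (∑ j, (∑ i, A₁ i j) * Complex.normSq ((y ∘ Sum.inl) j)) +
        ∑ j, (∑ i, A₂ i j) * Complex.normSq ((y ∘ Sum.inr) j) := by
    rw [Fintype.sum_sum_type]; simp [Function.comp]
  rw [hcol]
  have hmain : ∑ i, (∑ j : β ⊕ β, Matrix.fromCols A₁ A₂ i j)⁻¹ *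
        Complex.normSq ((((Matrix.fromCols A₁ A₂).map fun a => (a : ℂ)) *ᵥ y) i) ≤
      (∑ i, (∑ j, A₁ i j)⁻¹ *
          Complex.normSq (((A₁.map fun a => (a : ℂ)) *ᵥ (y ∘ Sum.inl)) i)) +
        ∑ i, (∑ j, A₂ i j)⁻¹ *
          Complex.normSq (((A₂.map fun a => (a : ℂ)) *ᵥ (y ∘ Sum.inr)) i) := by
    rw [← Finset.sum_add_distrib]
    refine Finset.sum_le_sum fun i _ => ?_
    rw [rowsum_fc, mulVec_fcC]
    have h1 : (0:ℝ) ≤ ∑ j, A₁ i j := Finset.sum_nonneg fun j _ => hA₁ i j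
    have h2 : (0:ℝ) ≤ ∑ j, A₂ i j := Finset.sum_nonneg fun j _ => hA₂ i j
    exact sc_keyC (∑ j, A₁ i j) (∑ j, A₂ i j) _ _ h1 h2
      (fun h => rowzeroC A₁ hA₁ _ i h) (fun h => rowzeroC A₂ hA₂ _ i h)
  linarith

end SVaux

/-- SV approximation of nonnegative matrices is preserved under horizontal
concatenation. -/
theorem stmt_14 {m n : ℕ} (A₁ A₂ Atil₁ Atil₂ : Matrix (Fin m) (Fin n) ℝ)
    (hA₁ : ∀ i j, 0 ≤ A₁ i j) (hA₂ : ∀ i j, 0 ≤ A₂ i j)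
    (hAtil₁ : ∀ i j, 0 ≤ Atil₁ i j) (hAtil₂ : ∀ i j, 0 ≤ Atil₂ i j)
    (ε : ℝ) (hε : 0 ≤ ε)
    (h₁ : IsSVgApprox ε A₁ Atil₁) (h₂ : IsSVgApprox ε A₂ Atil₂) :
    IsSVgApprox ε (Matrix.fromCols A₁ A₂) (Matrix.fromCols Atil₁ Atil₂) := by
  obtain ⟨hE₁, hF₁, hB₁⟩ := h₁
  obtain ⟨hE₂, hF₂, hB₂⟩ := h₂
  refine ⟨?_, ?_, ?_⟩
  · rw [errE_fc]; exact hE₁.add hE₂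
  · refine Matrix.PosSemidef.of_dotProduct_mulVec_nonneg (errF_isHermitian _) fun x => ?_
    have key := keyR A₁ A₂ hA₁ hA₂ x
    have n1 := hF₁.dotProduct_mulVec_nonneg (x ∘ Sum.inl)
    have n2 := hF₂.dotProduct_mulVec_nonneg (x ∘ Sum.inr)
    simp only [star_trivial] at n1 n2 ⊢
    linarith
  · intro x y
    have hsub : Matrix.fromCols Atil₁ Atil₂ - Matrix.fromCols A₁ A₂ =
        Matrix.fromCols (Atil₁ - A₁) (Atil₂ - A₂) := by
      ext i j; cases j <;> simp
    have hmv : (((Matrix.fromCols (Atil₁ - A₁) (Atil₂ - A₂)).map fun a => (a : ℂ)) *ᵥ y) =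
        (((Atil₁ - A₁).map fun a => (a : ℂ)) *ᵥ (y ∘ Sum.inl)) +
          (((Atil₂ - A₂).map fun a => (a : ℂ)) *ᵥ (y ∘ Sum.inr)) :=
      funext fun i => mulVec_fcC _ _ y i
    rw [hsub, hmv, dotProduct_add]
    have hEsplit : (star x ⬝ᵥ ((errE (Matrix.fromCols A₁ A₂)).map fun a => (a : ℂ)) *ᵥ x).re =
        (star x ⬝ᵥ ((errE A₁).map fun a => (a : ℂ)) *ᵥ x).re +
          (star x ⬝ᵥ ((errE A₂).map fun a => (a : ℂ)) *ᵥ x).re := by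
      rw [errE_fc]
      rw [Matrix.map_add (fun a : ℝ => (a : ℂ)) (by push_cast; simp),
        Matrix.add_mulVec, dotProduct_add, Complex.add_re]
    have hFkey := keyC A₁ A₂ hA₁ hA₂ y
    have h4 : (0:ℝ) ≤ ε / 4 := by positivity
    calc ‖star x ⬝ᵥ ((Atil₁ - A₁).map fun a => (a : ℂ)) *ᵥ (y ∘ Sum.inl) +
            star x ⬝ᵥ ((Atil₂ - A₂).map fun a => (a : ℂ)) *ᵥ (y ∘ Sum.inr)‖ ≤
          ‖star x ⬝ᵥ ((Atil₁ - A₁).map fun a => (a : ℂ)) *ᵥ (y ∘ Sum.inl)‖ +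
            ‖star x ⬝ᵥ ((Atil₂ - A₂).map fun a => (a : ℂ)) *ᵥ (y ∘ Sum.inr)‖ :=
        norm_add_le _ _
      _ ≤ ε / 4 * ((star x ⬝ᵥ ((errE A₁).map fun a => (a : ℂ)) *ᵥ x).re +
            (star (y ∘ Sum.inl) ⬝ᵥ ((errF A₁).map fun a => (a : ℂ)) *ᵥ (y ∘ Sum.inl)).re) +
          ε / 4 * ((star x ⬝ᵥ ((errE A₂).map fun a => (a : ℂ)) *ᵥ x).re +
            (star (y ∘ Sum.inr) ⬝ᵥ ((errF A₂).map fun a => (a : ℂ)) *ᵥ (y ∘ Sum.inr)).re) :=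
        add_le_add (hB₁ x (y ∘ Sum.inl)) (hB₂ x (y ∘ Sum.inr))
      _ ≤ ε / 4 * ((star x ⬝ᵥ ((errE (Matrix.fromCols A₁ A₂)).map fun a => (a : ℂ)) *ᵥ x).re +
            (star y ⬝ᵥ ((errF (Matrix.fromCols A₁ A₂)).map fun a => (a : ℂ)) *ᵥ y).re) := by
        rw [hEsplit]
        nlinarith [mul_le_mul_of_nonneg_left hFkey h4]
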